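/- Under the equal-share cost, best-response dynamics can cycle: there exists a finite instance of the multi-hop broadcast game, two distinct players i and v, and two action profiles a and a' with a' obtained from a by a unilateral deviation of player i that strictly decreases C_i^ES, and a obtained from a' by a unilateral deviation of player v that strictly decreases C_v^ES; hence the sequence of strict improvement steps never terminates. -/

import Mathlib

open Finset

variable {Q : Type*} [Fintype Q] [DecidableEq Q]

/-- The set of children of node `j` under action profile `a`
(the players are the nodes different from the source `S`). -/
def children (S : Q) (a : {i : Q // i ≠ S} → Q) (j : Q) :
    Finset {i : Q // i ≠ S} :=
  Finset.univ.filter (fun i => a i = j)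

/-- Total power required at node `j` to serve the set `M` of children:
circuitry power plus the largest unicast power, and `0` if `M` is empty. -/
noncomputable def nodePower (S : Q) (pc : Q → ℝ) (p : Q → Q → ℝ) (j : Q)
    (M : Finset {i : Q // i ≠ S}) : ℝ :=
  if h : M.Nonempty then pc j + M.sup' h (fun i => p i.1 j) else 0

/-- Network power: the sum of the node powers over all nodes. -/
noncomputable def netPower (S : Q) (pc : Q → ℝ) (p : Q → Q → ℝ)
    (a : {i : Q // i ≠ S} → Q) : ℝ :=
  ∑ j, nodePower S pc p j (children S a j)

/-- Marginal-contribution (MC) cost of player `i` at profile `a`. -/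
noncomputable def mcCost (S : Q) (pc : Q → ℝ) (p : Q → Q → ℝ)
    (a : {i : Q // i ≠ S} → Q) (i : {i : Q // i ≠ S}) : ℝ :=
  nodePower S pc p (a i) (children S a (a i)) -
    nodePower S pc p (a i) ((children S a (a i)).erase i)

/-- Equal-share (ES) cost of player `i` at profile `a`: the power of its parent
divided by the number of children of that parent. -/
noncomputable def esCost (S : Q) (pc : Q → ℝ) (p : Q → Q → ℝ)
    (a : {i : Q // i ≠ S} → Q) (i : {i : Q // i ≠ S}) : ℝ :=
  nodePower S pc p (a i) (children S a (a i)) /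
    ((children S a (a i)).card : ℝ)

/-! ### Auxiliary construction for the cycling example -/

/-- The action profile in the 7-node instance: players 3 and 4 are fixed
children of relays 1 and 2 respectively, the relays point to the source 0,
and the two switching players 5 and 6 choose targets `ti` and `tv`. -/
def prof7 (ti tv : Fin 7) (m : {m : Fin 7 // m ≠ 0}) : Fin 7 :=
  if m.1 = 5 then ti else if m.1 = 6 then tv
  else if m.1 = 3 then 1 else if m.1 = 4 then 2 else 0

/-- The unicast powers: player 5 needs power 1, player 6 needs power 3,
everybody else needs power 0 (independently of the receiver). -/
noncomputable def pp7 (i : Fin 7) (_ : Fin 7) : ℝ :=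
  if i = 5 then 1 else if i = 6 then 3 else 0

def x3 : {m : Fin 7 // m ≠ 0} := ⟨3, by decide⟩
def y4 : {m : Fin 7 // m ≠ 0} := ⟨4, by decide⟩
def i5 : {m : Fin 7 // m ≠ 0} := ⟨5, by decide⟩
def v6 : {m : Fin 7 // m ≠ 0} := ⟨6, by decide⟩

lemma ec (ti tv : Fin 7) (w : {m : Fin 7 // m ≠ 0}) (X : Finset {m : Fin 7 // m ≠ 0})
    (hc : children (0:Fin 7) (prof7 ti tv) (prof7 ti tv w) = X) (hX : X.Nonempty) :
    esCost (0:Fin 7) (fun _ => 0) pp7 (prof7 ti tv) w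
      = X.sup' hX (fun i => pp7 i.1 (prof7 ti tv w)) / X.card := by
  rw [esCost, hc, nodePower, dif_pos hX]; simp

lemma ec11i : esCost (0:Fin 7) (fun _ => 0) pp7 (prof7 1 1) i5 = 1 := by
  rw [ec 1 1 i5 {x3, i5, v6} (by decide) (by simp)]
  simp [pp7, x3, i5, v6, Finset.sup'_insert]
lemma ec21i : esCost (0:Fin 7) (fun _ => 0) pp7 (prof7 2 1) i5 = 1/2 := by
  rw [ec 2 1 i5 {y4, i5} (by decide) (by simp)]
  simp [pp7, y4, i5, Finset.sup'_insert, max_def]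
lemma ec21v : esCost (0:Fin 7) (fun _ => 0) pp7 (prof7 2 1) v6 = 3/2 := by
  rw [ec 2 1 v6 {x3, v6} (by decide) (by simp)]
  simp [pp7, x3, v6, Finset.sup'_insert, max_def]
lemma ec22v : esCost (0:Fin 7) (fun _ => 0) pp7 (prof7 2 2) v6 = 1 := by
  rw [ec 2 2 v6 {y4, i5, v6} (by decide) (by simp)]
  simp [pp7, y4, i5, v6, Finset.sup'_insert, max_def]
lemma ec22i : esCost (0:Fin 7) (fun _ => 0) pp7 (prof7 2 2) i5 = 1 := by
  rw [ec 2 2 i5 {y4, i5, v6} (by decide) (by simp)]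
  simp [pp7, y4, i5, v6, Finset.sup'_insert, max_def]
lemma ec12i : esCost (0:Fin 7) (fun _ => 0) pp7 (prof7 1 2) i5 = 1/2 := by
  rw [ec 1 2 i5 {x3, i5} (by decide) (by simp)]
  simp [pp7, x3, i5, Finset.sup'_insert, max_def]
lemma ec12v : esCost (0:Fin 7) (fun _ => 0) pp7 (prof7 1 2) v6 = 3/2 := by
  rw [ec 1 2 v6 {y4, v6} (by decide) (by simp)]
  simp [pp7, y4, v6, Finset.sup'_insert, max_def]
lemma ec11v : esCost (0:Fin 7) (fun _ => 0) pp7 (prof7 1 1) v6 = 1 := by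
  rw [ec 1 1 v6 {x3, i5, v6} (by decide) (by simp)]
  simp [pp7, x3, i5, v6, Finset.sup'_insert, max_def]

/-- The periodic (period 4) sequence of profiles along the improvement cycle. -/
def fseq (k : ℕ) : {m : Fin 7 // m ≠ 0} → Fin 7 :=
  if k % 4 = 0 then prof7 1 1 else if k % 4 = 1 then prof7 2 1
  else if k % 4 = 2 then prof7 2 2 else prof7 1 2

/-- Under the equal-share cost, best-response dynamics can cycle: in some
finite instance two distinct players `i` and `v` alternately perform strictly
improving unilateral deviations along a cycle of profiles
`a1 →ᵢ a2 →ᵥ a3 →ᵢ a4 →ᵥ a1`; hence there is an infinite sequence of strict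
improvement steps, i.e. the dynamics never terminates. -/
theorem es_brd_can_cycle :
    ∃ (n : ℕ) (S : Fin n) (pc : Fin n → ℝ) (p : Fin n → Fin n → ℝ),
      (∀ j, 0 ≤ pc j) ∧ (∀ i j, 0 ≤ p i j) ∧
      ∃ (i v : {m : Fin n // m ≠ S}), i ≠ v ∧
      ∃ a1 a2 a3 a4 : {m : Fin n // m ≠ S} → Fin n,
        (∀ m, a1 m ≠ m.1) ∧ (∀ m, a2 m ≠ m.1) ∧
        (∀ m, a3 m ≠ m.1) ∧ (∀ m, a4 m ≠ m.1) ∧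
        (∀ m, m ≠ i → a2 m = a1 m) ∧ esCost S pc p a2 i < esCost S pc p a1 i ∧
        (∀ m, m ≠ v → a3 m = a2 m) ∧ esCost S pc p a3 v < esCost S pc p a2 v ∧
        (∀ m, m ≠ i → a4 m = a3 m) ∧ esCost S pc p a4 i < esCost S pc p a3 i ∧
        (∀ m, m ≠ v → a1 m = a4 m) ∧ esCost S pc p a1 v < esCost S pc p a4 v ∧
        ∃ f : ℕ → ({m : Fin n // m ≠ S} → Fin n),
          (∀ k m, f k m ≠ m.1) ∧
          ∀ k, ∃ w, (∀ m, m ≠ w → f (k + 1) m = f k m) ∧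
            esCost S pc p (f (k + 1)) w < esCost S pc p (f k) w := by

  refine ⟨7, 0, fun _ => 0, pp7, fun _ => le_refl 0,
    fun i j => by unfold pp7; split <;> norm_num <;> split <;> norm_num,
    i5, v6, by decide, prof7 1 1, prof7 2 1, prof7 2 2, prof7 1 2,
    by decide, by decide, by decide, by decide,
    by decide, by rw [ec21i, ec11i]; norm_num,
    by decide, by rw [ec22v, ec21v]; norm_num,
    by decide, by rw [ec12i, ec22i]; norm_num,
    by decide, by rw [ec11v, ec12v]; norm_num,
    fseq, ?_, ?_⟩
  · intro k m
    rcases (show k % 4 = 0 ∨ k % 4 = 1 ∨ k % 4 = 2 ∨ k % 4 = 3 by omega) with h | h | h | h <;>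
      simp only [fseq, h] <;> norm_num <;> revert m <;> decide
  · intro k
    rcases (show k % 4 = 0 ∨ k % 4 = 1 ∨ k % 4 = 2 ∨ k % 4 = 3 by omega) with h | h | h | h
    · have h1 : (k + 1) % 4 = 1 := by omega
      refine ⟨i5, ?_, ?_⟩ <;> simp only [fseq, h, h1] <;> norm_num
      · decide
      · rw [ec21i, ec11i]; norm_num
    · have h1 : (k + 1) % 4 = 2 := by omega
      refine ⟨v6, ?_, ?_⟩ <;> simp only [fseq, h, h1] <;> norm_num
      · decide
      · rw [ec22v, ec21v]; norm_num
    · have h1 : (k + 1) % 4 = 3 := by omega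
      refine ⟨i5, ?_, ?_⟩ <;> simp only [fseq, h, h1] <;> norm_num
      · decide
      · rw [ec12i, ec22i]; norm_num
    · have h1 : (k + 1) % 4 = 0 := by omega
      refine ⟨v6, ?_, ?_⟩ <;> simp only [fseq, h, h1] <;> norm_num
      · decide
      · rw [ec11v, ec12v]; norm_num
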